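/- For any n-dimensional probability vector y, M(y) ⊆ T(y). That is, if x^{⊗k} ≺ y^{⊗k} for some integer k ≥ 1, then there exists a probability vector c (of some finite dimension) such that x ⊗ c ≺ y ⊗ c. -/

import Mathlib

open Finset

variable {ι κ : Type*}

/-- `eSum x l` is the sum of the `l` largest components of `x`. -/
noncomputable def eSum [Fintype ι] (x : ι → ℝ) (l : ℕ) : ℝ :=
  sSup {r : ℝ | ∃ s : Finset ι, s.card = l ∧ r = ∑ i ∈ s, x i}

/-- Majorization `x ≺ y` for vectors over the same (finite) index type:
`e_l(x) ≤ e_l(y)` for all `1 ≤ l ≤ n - 1`, with equal total sums. -/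
def Maj [Fintype ι] (x y : ι → ℝ) : Prop :=
  (∀ l : ℕ, 1 ≤ l → l < Fintype.card ι → eSum x l ≤ eSum y l) ∧
    ∑ i, x i = ∑ i, y i

/-- A probability vector: nonnegative components summing to 1. -/
def IsProbVec [Fintype ι] (x : ι → ℝ) : Prop :=
  (∀ i, 0 ≤ x i) ∧ ∑ i, x i = 1

/-- Kronecker product of two vectors. -/
def kron (x : ι → ℝ) (c : κ → ℝ) : ι × κ → ℝ := fun p => x p.1 * c p.2

/-- `k`-fold Kronecker power of a vector. -/
def kpow (x : ι → ℝ) (k : ℕ) : (Fin k → ι) → ℝ := fun f => ∏ j, x (f j)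

/-- Direct sum (concatenation) of two vectors. -/
def dsum (x : ι → ℝ) (c : κ → ℝ) : ι ⊕ κ → ℝ := Sum.elim x c

/-- `k`-fold direct sum (concatenation) of `x` with itself. -/
def dpow (x : ι → ℝ) (k : ℕ) : Fin k × ι → ℝ := fun p => x p.2

/-- `x ∈ S°(y)`: all partial-sum inequalities `e_l(x) < e_l(y)` are strict for
`1 ≤ l ≤ n - 1`, and the total sums coincide. -/
def InteriorS [Fintype ι] (x y : ι → ℝ) : Prop :=
  (∀ l : ℕ, 1 ≤ l → l < Fintype.card ι → eSum x l < eSum y l) ∧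
    ∑ i, x i = ∑ i, y i

/-- `d_x`: the number of nonzero components of `x`. -/
noncomputable def dsupp (x : ι → ℝ) : ℕ := Nat.card (Function.support x)

/-- The `α`-Renyi entropy `S^{(α)}(x)`; at `α = 1` it is the Shannon entropy. -/
noncomputable def renyi [Fintype ι] (x : ι → ℝ) (α : ℝ) : ℝ :=
  if α = 1 then -∑ i, x i * Real.logb 2 (x i)
  else (if 0 ≤ α then (1 : ℝ) else -1) / (1 - α) *
    Real.logb 2 (∑ i, if x i = 0 then 0 else x i ^ α)

/-- The Renyi entropy of `x` is not less than that of `y`. -/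
def RenyiGE [Fintype ι] [Fintype κ] (x : ι → ℝ) (y : κ → ℝ) : Prop :=
  (dsupp x > dsupp y ∧ ∀ α : ℝ, 0 ≤ α → renyi y α ≤ renyi x α) ∨
  (dsupp x = dsupp y ∧ ∀ α : ℝ, renyi y α ≤ renyi x α)

section helpers
variable [Fintype ι] [Fintype κ]

lemma eSum_set_finite (x : ι → ℝ) (l : ℕ) :
    {r : ℝ | ∃ s : Finset ι, s.card = l ∧ r = ∑ i ∈ s, x i}.Finite := by
  have hsub : {r : ℝ | ∃ s : Finset ι, s.card = l ∧ r = ∑ i ∈ s, x i} ⊆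
      (fun s : Finset ι => ∑ i ∈ s, x i) '' Set.univ := by
    rintro r ⟨s, _, rfl⟩; exact ⟨s, trivial, rfl⟩
  exact (Set.finite_univ.image _).subset hsub

lemma le_eSum (x : ι → ℝ) {l : ℕ} (s : Finset ι) (hs : s.card = l) :
    ∑ i ∈ s, x i ≤ eSum x l :=
  le_csSup (eSum_set_finite x l).bddAbove ⟨s, hs, rfl⟩

lemma eSum_le (x : ι → ℝ) {l : ℕ} {r : ℝ} (hl : l ≤ Fintype.card ι)
    (h : ∀ s : Finset ι, s.card = l → ∑ i ∈ s, x i ≤ r) : eSum x l ≤ r := by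
  obtain ⟨t, -, ht⟩ := Finset.exists_subset_card_eq (s := (univ : Finset ι)) (by simpa using hl)
  exact csSup_le ⟨_, t, ht, rfl⟩ (by rintro r ⟨s, hs, rfl⟩; exact h s hs)

lemma eSum_exists (x : ι → ℝ) {l : ℕ} (hl : l ≤ Fintype.card ι) :
    ∃ s : Finset ι, s.card = l ∧ eSum x l = ∑ i ∈ s, x i := by
  obtain ⟨t, -, ht⟩ := Finset.exists_subset_card_eq (s := (univ : Finset ι)) (by simpa using hl)
  have hne : {r : ℝ | ∃ s : Finset ι, s.card = l ∧ r = ∑ i ∈ s, x i}.Nonempty :=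
    ⟨_, t, ht, rfl⟩
  exact hne.csSup_mem (eSum_set_finite x l)

lemma eSum_zero (x : ι → ℝ) : eSum x 0 = 0 :=
  le_antisymm (eSum_le x (Nat.zero_le _) fun s hs => by
    rw [Finset.card_eq_zero] at hs; simp [hs]) (by simpa using le_eSum x ∅ rfl)

lemma eSum_card (x : ι → ℝ) : eSum x (Fintype.card ι) = ∑ i, x i :=
  le_antisymm (eSum_le x le_rfl fun s hs => by
    rw [Finset.eq_univ_of_card s hs])
    (le_eSum x univ (Finset.card_univ))

lemma eSum_of_card_lt (x : ι → ℝ) {l : ℕ} (hl : Fintype.card ι < l) : eSum x l = 0 := by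
  have : {r : ℝ | ∃ s : Finset ι, s.card = l ∧ r = ∑ i ∈ s, x i} = ∅ := by
    ext r; simp only [Set.mem_setOf_eq, Set.mem_empty_iff_false, iff_false]
    rintro ⟨s, hs, -⟩
    exact absurd (s.card_le_univ.trans_lt (by simpa using hl)) (by omega)
  rw [eSum, this, Real.sSup_empty]

lemma eSum_comp_equiv (e : κ ≃ ι) (x : ι → ℝ) (l : ℕ) : eSum (x ∘ e) l = eSum x l := by
  have hcard : Fintype.card κ = Fintype.card ι := Fintype.card_congr e
  rcases le_or_gt l (Fintype.card ι) with hl | hl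
  · refine le_antisymm ?_ ?_
    · refine eSum_le _ (hl.trans_eq hcard.symm) fun s hs => ?_
      have := le_eSum x (s.map e.toEmbedding) (by simpa using hs)
      rwa [Finset.sum_map] at this
    · refine eSum_le _ hl fun s hs => ?_
      have := le_eSum (x ∘ e) (s.map e.symm.toEmbedding) (by simpa using hs)
      rw [Finset.sum_map] at this
      simpa using this
  · rw [eSum_of_card_lt _ hl, eSum_of_card_lt _ (hcard ▸ hl)]

lemma eSum_smul (x : ι → ℝ) {r : ℝ} (hr : 0 ≤ r) (l : ℕ) :
    eSum (fun i => r * x i) l = r * eSum x l := by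
  rcases le_or_gt l (Fintype.card ι) with hl | hl
  · refine le_antisymm (eSum_le _ hl fun s hs => ?_) ?_
    · rw [← Finset.mul_sum]
      exact mul_le_mul_of_nonneg_left (le_eSum x s hs) hr
    · obtain ⟨s, hs, heq⟩ := eSum_exists x hl
      rw [heq, Finset.mul_sum]
      exact le_eSum _ s hs
  · rw [eSum_of_card_lt _ hl, eSum_of_card_lt _ hl, mul_zero]

end helpers

section helpers2
variable [Fintype ι] [Fintype κ]

lemma maj_comp_equiv (e : κ ≃ ι) {u v : ι → ℝ} (h : Maj u v) : Maj (u ∘ e) (v ∘ e) := by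
  refine ⟨fun l hl1 hl2 => ?_, ?_⟩
  · rw [eSum_comp_equiv, eSum_comp_equiv]
    exact h.1 l hl1 (by rwa [Fintype.card_congr e] at hl2)
  · rw [show (∑ i, (u ∘ e) i) = ∑ i, u i from Equiv.sum_comp e u,
      show (∑ i, (v ∘ e) i) = ∑ i, v i from Equiv.sum_comp e v]
    exact h.2

lemma dsum_maj {a b : ι → ℝ} (s : κ → ℝ)
    (h : ∀ p : ℕ, p ≤ Fintype.card ι → eSum a p ≤ eSum b p)
    (hsum : ∑ i, a i = ∑ i, b i) : Maj (dsum a s) (dsum b s) := by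
  constructor
  · intro l hl1 hl2
    refine eSum_le _ hl2.le fun t ht => ?_
    have hc : t.toLeft.card + t.toRight.card = l := by
      rw [Finset.card_toLeft_add_card_toRight, ht]
    have hsplit : ∑ i ∈ t, dsum a s i = ∑ i ∈ t.toLeft, a i + ∑ j ∈ t.toRight, s j := by
      conv_lhs => rw [← Finset.toLeft_disjSum_toRight (u := t)]
      rw [Finset.sum_disjSum]; rfl
    have hp : t.toLeft.card ≤ Fintype.card ι := by
      simpa using t.toLeft.card_le_univ
    obtain ⟨s', hs', heq⟩ := eSum_exists b hp
    calc ∑ i ∈ t, dsum a s i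
        = ∑ i ∈ t.toLeft, a i + ∑ j ∈ t.toRight, s j := hsplit
      _ ≤ eSum b t.toLeft.card + ∑ j ∈ t.toRight, s j := by
          have := (le_eSum a t.toLeft rfl).trans (h _ hp)
          linarith
      _ = ∑ i ∈ s'.disjSum t.toRight, dsum b s i := by
          rw [Finset.sum_disjSum, heq]; rfl
      _ ≤ eSum (dsum b s) l := le_eSum _ _ (by rw [Finset.card_disjSum, hs', hc])
  · rw [Fintype.sum_sum_type, Fintype.sum_sum_type]
    simp only [dsum, Sum.elim_inl, Sum.elim_inr]
    rw [hsum]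
end helpers2

noncomputable def zvec {n : ℕ} (x y : Fin n → ℝ) (k m : ℕ) : (Fin k → Fin n) → ℝ :=
  fun f => ∏ i : Fin k, (if (i : ℕ) < m then x (f i) else y (f i))

noncomputable def cvec {n : ℕ} (x y : Fin n → ℝ) (k' : ℕ) :
    Fin (k' + 1) × (Fin k' → Fin n) → ℝ :=
  fun p => ((k' : ℝ) + 1)⁻¹ * ∏ i : Fin k',
    (if (i : ℕ) < (p.1 : ℕ) then x (p.2 i) else y (p.2 i))

lemma zvec_top {n : ℕ} (x y : Fin n → ℝ) (k : ℕ) : zvec x y k k = kpow x k := by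
  funext f
  simp only [zvec, kpow]
  exact Finset.prod_congr rfl fun i _ => if_pos i.isLt

lemma zvec_bot {n : ℕ} (x y : Fin n → ℝ) (k : ℕ) : zvec x y k 0 = kpow y k := by
  funext f
  simp only [zvec, kpow]
  exact Finset.prod_congr rfl fun i _ => if_neg (by omega)

lemma val_succAbove {k' : ℕ} (j : Fin (k' + 1)) (i : Fin k') :
    ((j.succAbove i : Fin (k' + 1)) : ℕ) =
      if (i : ℕ) < (j : ℕ) then (i : ℕ) else (i : ℕ) + 1 := by
  rcases lt_or_ge ((i : ℕ)) ((j : ℕ)) with h | h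
  · rw [Fin.succAbove_of_castSucc_lt _ _ (by simpa [Fin.lt_def] using h), if_pos h]
    simp
  · rw [Fin.succAbove_of_le_castSucc _ _ (by simpa [Fin.le_def] using h),
      if_neg (not_lt.mpr h)]
    simp

/-- The equivalence splitting off the coordinate `j` from a tuple. -/
def myE (n k' : ℕ) : Fin (k' + 1) × (Fin (k' + 1) → Fin n) ≃
    Fin n × (Fin (k' + 1) × (Fin k' → Fin n)) where
  toFun p := (p.2 p.1, (p.1, fun i => p.2 (p.1.succAbove i)))
  invFun q := (q.2.1, q.2.1.insertNth q.1 q.2.2)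
  left_inv p := by
    refine Prod.ext rfl ?_
    exact Fin.insertNth_self_removeNth p.1 p.2
  right_inv q := by
    obtain ⟨a, j, g⟩ := q
    simp

lemma kron_cvec_x {n k' : ℕ} (x y : Fin n → ℝ) (p : Fin (k' + 1) × (Fin (k' + 1) → Fin n)) :
    kron x (cvec x y k') (myE n k' p) =
      ((k' : ℝ) + 1)⁻¹ * zvec x y (k' + 1) ((p.1 : ℕ) + 1) p.2 := by
  obtain ⟨j, f⟩ := p
  show x (f j) * (((k' : ℝ) + 1)⁻¹ * ∏ i : Fin k',
      (if (i : ℕ) < (j : ℕ) then x (f (j.succAbove i)) else y (f (j.succAbove i)))) = _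
  simp only [zvec]
  rw [Fin.prod_univ_succAbove
      (fun i : Fin (k' + 1) => if (i : ℕ) < (j : ℕ) + 1 then x (f i) else y (f i)) j]
  rw [if_pos (by omega)]
  have : ∀ i : Fin k',
      (if ((j.succAbove i : Fin (k'+1)) : ℕ) < (j : ℕ) + 1 then x (f (j.succAbove i))
        else y (f (j.succAbove i)))
      = (if (i : ℕ) < (j : ℕ) then x (f (j.succAbove i)) else y (f (j.succAbove i))) := by
    intro i
    rw [val_succAbove]
    rcases lt_or_ge ((i : ℕ)) ((j : ℕ)) with h | h
    · simp only [if_pos h]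
      rw [if_pos (by omega)]
    · simp only [if_neg (not_lt.mpr h)]
      rw [if_neg (by omega)]
  rw [Finset.prod_congr rfl fun i _ => this i]
  ring

lemma kron_cvec_y {n k' : ℕ} (x y : Fin n → ℝ) (p : Fin (k' + 1) × (Fin (k' + 1) → Fin n)) :
    kron y (cvec x y k') (myE n k' p) =
      ((k' : ℝ) + 1)⁻¹ * zvec x y (k' + 1) (p.1 : ℕ) p.2 := by
  obtain ⟨j, f⟩ := p
  show y (f j) * (((k' : ℝ) + 1)⁻¹ * ∏ i : Fin k',
      (if (i : ℕ) < (j : ℕ) then x (f (j.succAbove i)) else y (f (j.succAbove i)))) = _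
  simp only [zvec]
  rw [Fin.prod_univ_succAbove
      (fun i : Fin (k' + 1) => if (i : ℕ) < (j : ℕ) then x (f i) else y (f i)) j]
  rw [if_neg (by omega)]
  have : ∀ i : Fin k',
      (if ((j.succAbove i : Fin (k'+1)) : ℕ) < (j : ℕ) then x (f (j.succAbove i))
        else y (f (j.succAbove i)))
      = (if (i : ℕ) < (j : ℕ) then x (f (j.succAbove i)) else y (f (j.succAbove i))) := by
    intro i
    rw [val_succAbove]
    rcases lt_or_ge ((i : ℕ)) ((j : ℕ)) with h | h
    · simp only [if_pos h]
    · simp only [if_neg (not_lt.mpr h)]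
      rw [if_neg (by omega)]
  rw [Finset.prod_congr rfl fun i _ => this i]
  ring

/-- Splitting `Fin (k'+1) × F` as `F ⊕ (Fin k' × F)`, last block separate. -/
def sigL (n k' : ℕ) : Fin (k' + 1) × (Fin (k' + 1) → Fin n) ≃
    ((Fin (k' + 1) → Fin n) ⊕ (Fin k' × (Fin (k' + 1) → Fin n))) where
  toFun p := if h : (p.1 : ℕ) < k' then Sum.inr (⟨(p.1 : ℕ), h⟩, p.2) else Sum.inl p.2
  invFun q := Sum.elim (fun f => (Fin.last k', f)) (fun q => (q.1.castSucc, q.2)) q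
  left_inv p := by
    obtain ⟨j, f⟩ := p
    by_cases h : (j : ℕ) < k'
    · simp only [dif_pos h, Sum.elim_inr]
      simp [Prod.ext_iff, Fin.ext_iff]
    · simp only [dif_neg h, Sum.elim_inl]
      have hj : (j : ℕ) = k' := by have := j.isLt; omega
      simp [Prod.ext_iff, Fin.ext_iff, hj]
  right_inv q := by
    rcases q with f | ⟨j, f⟩
    · simp only [Sum.elim_inl]
      exact dif_neg (by simp)
    · simp only [Sum.elim_inr]
      exact (dif_pos (by simpa using j.isLt)).trans (by simp [Prod.ext_iff, Fin.ext_iff])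

/-- Splitting `Fin (k'+1) × F` as `F ⊕ (Fin k' × F)`, first block separate. -/
def sigR (n k' : ℕ) : Fin (k' + 1) × (Fin (k' + 1) → Fin n) ≃
    ((Fin (k' + 1) → Fin n) ⊕ (Fin k' × (Fin (k' + 1) → Fin n))) where
  toFun p := if h : 0 < (p.1 : ℕ) then
      Sum.inr (⟨(p.1 : ℕ) - 1, by have := p.1.isLt; omega⟩, p.2) else Sum.inl p.2
  invFun q := Sum.elim (fun f => (0, f)) (fun q => (q.1.succ, q.2)) q
  left_inv p := by
    obtain ⟨j, f⟩ := p
    by_cases h : 0 < (j : ℕ)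
    · simp only [dif_pos h, Sum.elim_inr]
      simp only [Prod.ext_iff, Fin.ext_iff, Fin.val_succ]
      constructor
      · omega
      · trivial
    · simp only [dif_neg h, Sum.elim_inl]
      have hj : (j : ℕ) = 0 := by omega
      simp [Prod.ext_iff, Fin.ext_iff, hj]
  right_inv q := by
    rcases q with f | ⟨j, f⟩
    · simp only [Sum.elim_inl]
      exact dif_neg (by simp)
    · simp only [Sum.elim_inr]
      exact (dif_pos (by simp)).trans (by simp [Prod.ext_iff, Fin.ext_iff])

/-- For any probability vector `y`, `M(y) ⊆ T(y)`: if `x^{⊗k} ≺ y^{⊗k}` for some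
`k ≥ 1`, then there is a probability vector `c` (of some finite dimension) with
`x ⊗ c ≺ y ⊗ c`. -/
theorem stmt1 {n : ℕ} (x y : Fin n → ℝ) (hx : IsProbVec x) (hy : IsProbVec y)
    (h : ∃ k : ℕ, 1 ≤ k ∧ Maj (kpow x k) (kpow y k)) :
    ∃ (m : ℕ) (c : Fin m → ℝ), IsProbVec c ∧ Maj (kron x c) (kron y c) := by
  obtain ⟨k, hk1, hmaj⟩ := h
  rcases Nat.eq_zero_or_pos n with hn | hn
  · refine absurd hx.2 ?_
    subst hn
    simp
  obtain ⟨k', rfl⟩ : ∃ k', k = k' + 1 := ⟨k - 1, by omega⟩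
  classical
  set κR : ℝ := ((k' : ℝ) + 1)⁻¹ with hκdef
  have hκ0 : (0 : ℝ) ≤ κR := by positivity
  have hκne : ((k' : ℝ) + 1) ≠ 0 := by positivity
  -- cvec is a probability vector
  have hc0 : IsProbVec (cvec x y k') := by
    constructor
    · intro p
      refine mul_nonneg hκ0 (Finset.prod_nonneg fun i _ => ?_)
      split_ifs
      · exact hx.1 _
      · exact hy.1 _
    · rw [Fintype.sum_prod_type]
      have hinner : ∀ j : Fin (k' + 1),
          ∑ g : Fin k' → Fin n, cvec x y k' (j, g) = κR := by
        intro j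
        simp only [cvec, ← Finset.mul_sum]
        rw [← Fintype.prod_sum (fun (i : Fin k') (a : Fin n) =>
          if (i : ℕ) < (j : ℕ) then x a else y a)]
        have : ∀ i : Fin k',
            (∑ a, if (i : ℕ) < (j : ℕ) then x a else y a) = 1 := by
          intro i
          by_cases hij : (i : ℕ) < (j : ℕ) <;> simp [hij, hx.2, hy.2]
        rw [Finset.prod_congr rfl fun i _ => this i, Finset.prod_const_one, mul_one]
      rw [Finset.sum_congr rfl fun j _ => hinner j]
      simp only [Finset.sum_const, Finset.card_univ, Fintype.card_fin, nsmul_eq_mul]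
      push_cast
      rw [hκdef, mul_inv_cancel₀ hκne]
  -- key eSum comparison hypothesis
  have hkey : ∀ p : ℕ, p ≤ Fintype.card (Fin (k' + 1) → Fin n) →
      eSum (fun f => κR * kpow x (k' + 1) f) p ≤
        eSum (fun f => κR * kpow y (k' + 1) f) p := by
    intro p hp
    rw [eSum_smul _ hκ0, eSum_smul _ hκ0]
    refine mul_le_mul_of_nonneg_left ?_ hκ0
    rcases Nat.eq_zero_or_pos p with rfl | hp1
    · simp [eSum_zero]
    rcases eq_or_lt_of_le hp with rfl | hp2
    · rw [eSum_card, eSum_card]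
      exact le_of_eq hmaj.2
    · exact hmaj.1 p hp1 hp2
  have hsum_uv : ∑ f : Fin (k' + 1) → Fin n, κR * kpow x (k' + 1) f =
      ∑ f : Fin (k' + 1) → Fin n, κR * kpow y (k' + 1) f := by
    rw [← Finset.mul_sum, ← Finset.mul_sum, hmaj.2]
  have hDS := dsum_maj (fun q : Fin k' × (Fin (k' + 1) → Fin n) =>
      κR * zvec x y (k' + 1) ((q.1 : ℕ) + 1) q.2) hkey hsum_uv
  set S : Fin k' × (Fin (k' + 1) → Fin n) → ℝ := fun q =>
      κR * zvec x y (k' + 1) ((q.1 : ℕ) + 1) q.2 with hSdef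
  set L : Fin (k' + 1) × (Fin (k' + 1) → Fin n) → ℝ := fun p =>
      κR * zvec x y (k' + 1) ((p.1 : ℕ) + 1) p.2 with hLdef
  set R : Fin (k' + 1) × (Fin (k' + 1) → Fin n) → ℝ := fun p =>
      κR * zvec x y (k' + 1) (p.1 : ℕ) p.2 with hRdef
  have hLsig : L = dsum (fun f => κR * kpow x (k' + 1) f) S ∘ (sigL n k') := by
    funext p
    obtain ⟨j, f⟩ := p
    simp only [Function.comp_apply, sigL, Equiv.coe_fn_mk]
    by_cases hj : (j : ℕ) < k'
    · rw [dif_pos hj]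
      simp [dsum, hSdef, hLdef]
    · rw [dif_neg hj]
      have hj' : (j : ℕ) + 1 = k' + 1 := by have := j.isLt; omega
      simp only [dsum, Sum.elim_inl, hLdef]
      rw [hj', zvec_top]
  have hRsig : R = dsum (fun f => κR * kpow y (k' + 1) f) S ∘ (sigR n k') := by
    funext p
    obtain ⟨j, f⟩ := p
    simp only [Function.comp_apply, sigR, Equiv.coe_fn_mk]
    by_cases hj : 0 < (j : ℕ)
    · rw [dif_pos hj]
      have hj' : (j : ℕ) - 1 + 1 = (j : ℕ) := by omega
      simp only [dsum, Sum.elim_inr, hSdef, hRdef]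
      rw [hj']
    · rw [dif_neg hj]
      have hj' : (j : ℕ) = 0 := by omega
      simp only [dsum, Sum.elim_inl, hRdef]
      rw [hj', zvec_bot]
  have hMajLR : Maj L R := by
    constructor
    · intro l hl1 hl2
      rw [hLsig, hRsig, eSum_comp_equiv, eSum_comp_equiv]
      refine hDS.1 l hl1 ?_
      rwa [← Fintype.card_congr (sigL n k')]
    · rw [hLsig, hRsig]
      rw [show (∑ p, (dsum (fun f => κR * kpow x (k' + 1) f) S ∘ (sigL n k')) p)
          = ∑ q, dsum (fun f => κR * kpow x (k' + 1) f) S q from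
          Equiv.sum_comp (sigL n k') _,
        show (∑ p, (dsum (fun f => κR * kpow y (k' + 1) f) S ∘ (sigR n k')) p)
          = ∑ q, dsum (fun f => κR * kpow y (k' + 1) f) S q from
          Equiv.sum_comp (sigR n k') _]
      exact hDS.2
  -- transfer along myE
  have hx_eq : kron x (cvec x y k') = L ∘ (myE n k').symm := by
    funext p
    rw [Function.comp_apply, ← Equiv.apply_symm_apply (myE n k') p, kron_cvec_x]
    simp [hLdef, hκdef]
  have hy_eq : kron y (cvec x y k') = R ∘ (myE n k').symm := by
    funext p
    rw [Function.comp_apply, ← Equiv.apply_symm_apply (myE n k') p, kron_cvec_y]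
    simp [hRdef, hκdef]
  have hMajc0 : Maj (kron x (cvec x y k')) (kron y (cvec x y k')) := by
    rw [hx_eq, hy_eq]
    exact maj_comp_equiv _ hMajLR
  -- transfer to Fin m
  set e := (Fintype.equivFin (Fin (k' + 1) × (Fin k' → Fin n))).symm with hedef
  refine ⟨Fintype.card (Fin (k' + 1) × (Fin k' → Fin n)), cvec x y k' ∘ e, ⟨?_, ?_⟩, ?_⟩
  · intro i
    exact hc0.1 _
  · rw [show (∑ i, (cvec x y k' ∘ e) i) = ∑ p, cvec x y k' p from
      Equiv.sum_comp e (cvec x y k')]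
    exact hc0.2
  · have hxc : kron x (cvec x y k' ∘ e) =
        kron x (cvec x y k') ∘ (Equiv.prodCongr (Equiv.refl (Fin n)) e) := rfl
    have hyc : kron y (cvec x y k' ∘ e) =
        kron y (cvec x y k') ∘ (Equiv.prodCongr (Equiv.refl (Fin n)) e) := rfl
    rw [hxc, hyc]
    exact maj_comp_equiv _ hMajc0
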